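/- Let Σ = [[A, B],[Bᵀ, C]] be a symmetric matrix over an infinite field K where C is the identity matrix and B is fixed. Then for a generic choice of the diagonal entries of A (i.e., on a nonempty Zariski-open set of diagonal values), the Schur complement A − B Bᵀ is invertible; in fact, for generic diagonal entries of A, the entire matrix Σ is principally regular. -/

import Mathlib

open Matrix

private theorem genL {K : Type*} [Field K] {ι : Type*} {α : Type*} [Fintype α] [DecidableEq α]
    (N : Matrix α α (MvPolynomial ι K)) (G : Matrix α α K) (v : α → ι)
    (h : ∀ i j, N i j = (if i = j then MvPolynomial.X (v i) else 0) + MvPolynomial.C (G i j)) :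
    N.det ≠ 0 := by
  set φ : MvPolynomial ι K →+* Polynomial K :=
    (MvPolynomial.eval₂Hom (Polynomial.C : K →+* Polynomial K) (fun _ => Polynomial.X))
  have hmap : N.map φ = charmatrix (-G) := by
    ext i j
    by_cases hij : i = j
    · subst hij
      simp [h, φ, charmatrix_apply_eq]
    · simp [h i j, if_neg hij, φ, charmatrix_apply_ne _ _ _ hij]
  intro h0
  have : (charmatrix (-G)).det = 0 := by
    have hd : φ N.det = (N.map φ).det := by
      rw [RingHom.map_det]; rfl
    rw [← hmap, ← hd, h0, map_zero]
  exact (Matrix.charpoly_monic (-G)).ne_zero this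

private theorem map_det' {R S : Type*} [CommRing R] [CommRing S] (f : R →+* S)
    {α : Type*} [Fintype α] [DecidableEq α] (N : Matrix α α R) :
    f N.det = (N.map f).det := by
  rw [RingHom.map_det]; rfl

theorem generic_diagonal_principally_regular
    {K : Type*} [Field K] [Infinite K]
    {m n : Type*} [Fintype m] [Fintype n] [DecidableEq m] [DecidableEq n]
    (A : Matrix m m K) (hA : A.IsSymm) (B : Matrix m n K) :
    ∃ p : MvPolynomial m K, p ≠ 0 ∧
      ∀ d : m → K, MvPolynomial.eval d p ≠ 0 →
        -- `A'` is `A` with its diagonal replaced by `d`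
        ∀ A' : Matrix m m K,
          (∀ i j, i ≠ j → A' i j = A i j) → (∀ i, A' i i = d i) →
          (A' - B * Bᵀ).det ≠ 0 ∧
          (∀ S : Finset (m ⊕ n),
            ((Matrix.fromBlocks A' B Bᵀ 1).submatrix
              ((↑) : S → m ⊕ n) ((↑) : S → m ⊕ n)).det ≠ 0) := by
  classical
  set R := MvPolynomial m K
  set A'' : Matrix m m R := fun i j => if i = j then MvPolynomial.X i else MvPolynomial.C (A i j)
    with hA''
  have hA''ij : ∀ i j, A'' i j = if i = j then MvPolynomial.X i else MvPolynomial.C (A i j) :=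
    fun i j => rfl
  set M : Matrix (m ⊕ n) (m ⊕ n) R :=
    Matrix.fromBlocks A'' (B.map MvPolynomial.C) (Bᵀ.map MvPolynomial.C) 1 with hM
  set q₀ : R := (A'' - (B * Bᵀ).map MvPolynomial.C).det with hq₀
  set qS : Finset (m ⊕ n) → R := fun S =>
    (M.submatrix ((↑) : S → m ⊕ n) ((↑) : S → m ⊕ n)).det with hqS
  -- q₀ ≠ 0
  have hq₀ne : q₀ ≠ 0 := by
    apply genL _ (fun i j => (if i = j then 0 else A i j) - (B * Bᵀ) i j) (id : m → m)
    intro i j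
    simp only [Matrix.sub_apply, Matrix.map_apply, hA''ij, map_sub, apply_ite MvPolynomial.C,
      map_zero, id]
    split_ifs with h <;> ring
  -- each qS ≠ 0
  have hqSne : ∀ S : Finset (m ⊕ n), qS S ≠ 0 := by
    intro S
    -- equivalence between S and toLeft ⊕ toRight
    let e : (↥S.toLeft ⊕ ↥S.toRight) ≃ ↥S :=
      { toFun := Sum.elim (fun i => ⟨Sum.inl i.1, Finset.mem_toLeft.1 i.2⟩)
          (fun j => ⟨Sum.inr j.1, Finset.mem_toRight.1 j.2⟩)
        invFun := fun x =>
          match x with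
          | ⟨Sum.inl i, h⟩ => Sum.inl ⟨i, Finset.mem_toLeft.2 h⟩
          | ⟨Sum.inr j, h⟩ => Sum.inr ⟨j, Finset.mem_toRight.2 h⟩
        left_inv := by rintro (⟨i, hi⟩ | ⟨j, hj⟩) <;> rfl
        right_inv := by rintro ⟨(i | j), h⟩ <;> rfl }
    have hdet : qS S =
        (Matrix.fromBlocks
          (A''.submatrix ((↑) : S.toLeft → m) ((↑) : S.toLeft → m))
          ((B.map MvPolynomial.C).submatrix ((↑) : S.toLeft → m) ((↑) : S.toRight → n))
          ((Bᵀ.map MvPolynomial.C).submatrix ((↑) : S.toRight → n) ((↑) : S.toLeft → m))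
          (1 : Matrix ↥S.toRight ↥S.toRight R)).det := by
      show (M.submatrix ((↑) : S → m ⊕ n) ((↑) : S → m ⊕ n)).det = _
      rw [← Matrix.det_submatrix_equiv_self e
        (M.submatrix ((↑) : S → m ⊕ n) ((↑) : S → m ⊕ n))]
      congr 1
      ext i j : 1
      rcases i with (i | i) <;> rcases j with (j | j)
      · rfl
      · rfl
      · rfl
      · show (1 : Matrix n n R) i.1 j.1 = (1 : Matrix ↥S.toRight ↥S.toRight R) i j
        by_cases hij : i = j
        · subst hij; rw [Matrix.one_apply_eq, Matrix.one_apply_eq]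
        · rw [Matrix.one_apply_ne hij, Matrix.one_apply_ne (fun hc => hij (Subtype.ext hc))]
    rw [hdet, Matrix.det_fromBlocks_one₂₂]
    apply genL _
      (fun i j : ↥S.toLeft => (if i = j then 0 else A i.1 j.1)
        - ∑ k : ↥S.toRight, B i.1 k.1 * B j.1 k.1)
      (fun i : ↥S.toLeft => (i : m))
    intro i j
    simp only [Matrix.sub_apply, Matrix.mul_apply, Matrix.submatrix_apply, Matrix.map_apply,
      Matrix.transpose_apply, hA''ij, map_sub, MvPolynomial.C_mul, apply_ite MvPolynomial.C,
      map_zero]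
    by_cases h : i = j
    · have h' : (i : m) = (j : m) := by rw [h]
      simp only [h, h', if_true, map_sum, MvPolynomial.C_mul]
      ring
    · have h' : (i : m) ≠ (j : m) := fun hc => h (Subtype.ext hc)
      simp only [if_neg h, if_neg h', map_sum, MvPolynomial.C_mul]
      ring
  refine ⟨q₀ * ∏ S : Finset (m ⊕ n), qS S, mul_ne_zero hq₀ne (Finset.prod_ne_zero_iff.2
    fun S _ => hqSne S), ?_⟩
  intro d hp A' hoff hdiag
  have hmapA : A''.map (MvPolynomial.eval d) = A' := by
    ext i j
    by_cases h : i = j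
    · subst h; simp [hA''ij, hdiag]
    · simp [hA''ij, h, hoff i j h]
  rw [_root_.map_mul] at hp
  have hp₀ : MvPolynomial.eval d q₀ ≠ 0 := left_ne_zero_of_mul hp
  have hpS : ∀ S : Finset (m ⊕ n), MvPolynomial.eval d (qS S) ≠ 0 := by
    intro S h0
    apply right_ne_zero_of_mul hp
    rw [_root_.map_prod]
    exact Finset.prod_eq_zero (Finset.mem_univ S) h0
  constructor
  · intro h0
    apply hp₀
    have hsub : (A'' - (B * Bᵀ).map MvPolynomial.C).map (MvPolynomial.eval d)
        = A' - B * Bᵀ := by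
      ext i j
      simp only [Matrix.sub_apply, Matrix.map_apply, _root_.map_sub, MvPolynomial.eval_C]
      have : (MvPolynomial.eval d) (A'' i j) = A' i j := by rw [← hmapA]; rfl
      rw [this]
    rw [hq₀, map_det' (MvPolynomial.eval d), hsub, h0]
  · intro S h0
    apply hpS S
    have hmapM : M.map (MvPolynomial.eval d) = Matrix.fromBlocks A' B Bᵀ 1 := by
      ext i j
      rcases i with (i | i) <;> rcases j with (j | j)
      · show (MvPolynomial.eval d) (A'' i j) = A' i j
        rw [← hmapA]; rfl
      · show (MvPolynomial.eval d) (MvPolynomial.C (B i j)) = B i j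
        simp
      · show (MvPolynomial.eval d) (MvPolynomial.C (Bᵀ i j)) = Bᵀ i j
        simp
      · show (MvPolynomial.eval d) ((1 : Matrix n n R) i j) = (1 : Matrix n n K) i j
        simp [Matrix.one_apply, apply_ite]
    have hd : MvPolynomial.eval d (qS S) =
        ((Matrix.fromBlocks A' B Bᵀ 1).submatrix
          ((↑) : S → m ⊕ n) ((↑) : S → m ⊕ n)).det := by
      show (MvPolynomial.eval d) (M.submatrix ((↑) : S → m ⊕ n) ((↑) : S → m ⊕ n)).det = _
      rw [map_det' (MvPolynomial.eval d), ← hmapM]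
      rfl
    rw [hd, h0]
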